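/- A C^∞ function F : ℂ → ℂ belongs to M^{ν,μ}_τ(ℂ) if and only if the function G(z) = e^{iφ(z)}·F(z) satisfies G(z+γ) = χ_τ(γ)·j^{−B}([1,γ], z)·G(z) for all γ ∈ Γ and z ∈ ℂ, where χ_τ(γ) = exp(iφ(γ) − 2iμ·Im⟨τ(0), ρ([1,γ])⁻¹·0⟩); in other words, the image of M^{ν,μ}_τ(ℂ) under the transformation W f = e^{iφ}f is exactly the space of Landau (Γ,χ_τ)-automorphic functions of magnitude B. -/

import Mathlib

noncomputable section

open Complex

/-- The group `G = 𝕋 ⋉ ℂ`, with elements `[a,b]`, acting on `ℂ` by `z ↦ a z + b`. -/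
@[ext]
structure GT : Type where
  a : Circle
  b : ℂ

namespace GT

instance : Group GT where
  mul g h := ⟨g.a * h.a, (g.a : ℂ) * h.b + g.b⟩
  one := ⟨1, 0⟩
  inv g := ⟨g.a⁻¹, -((g.a⁻¹ : ℂ) * g.b)⟩
  mul_assoc g h k := by
    refine GT.ext (mul_assoc _ _ _) ?_
    show ((g.a * h.a : Circle) : ℂ) * k.b + ((g.a : ℂ) * h.b + g.b)
        = (g.a : ℂ) * ((h.a : ℂ) * k.b + h.b) + g.b
    push_cast; ring
  one_mul g := by
    refine GT.ext (one_mul _) ?_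
    show ((1 : Circle) : ℂ) * g.b + 0 = g.b
    simp
  mul_one g := by
    refine GT.ext (mul_one _) ?_
    show (g.a : ℂ) * 0 + g.b = g.b
    simp
  inv_mul_cancel g := by
    refine GT.ext (inv_mul_cancel _) ?_
    show ((g.a⁻¹ : Circle) : ℂ) * g.b + -(((g.a : ℂ))⁻¹ * g.b) = 0
    push_cast; ring

/-- The action of `G` on `ℂ` : `[a,b]·z = a z + b`. -/
def act (g : GT) (z : ℂ) : ℂ := (g.a : ℂ) * z + g.b

end GT

/-- The Hermitian product `⟨z,w⟩ = z·conj w`. -/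
def herm (z w : ℂ) : ℂ := z * (starRingEnd ℂ) w

/-- The automorphic factor `j^α(g,z) = exp(2 i α Im⟨z, g⁻¹·0⟩)`. -/
def jfac (α : ℝ) (g : GT) (z : ℂ) : ℂ :=
  Complex.exp (2 * Complex.I * (α : ℂ) * ((herm z (GT.act g⁻¹ 0)).im : ℂ))

/-- The Wirtinger derivative `∂f/∂z = (1/2)(∂f/∂x − i ∂f/∂y)`. -/
def wderiv (f : ℂ → ℂ) (z : ℂ) : ℂ :=
  (1 / 2 : ℂ) * (fderiv ℝ f z 1 - Complex.I * fderiv ℝ f z Complex.I)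

/-- The anti-Wirtinger derivative `∂f/∂z̄ = (1/2)(∂f/∂x + i ∂f/∂y)`. -/
def wderivBar (f : ℂ → ℂ) (z : ℂ) : ℂ :=
  (1 / 2 : ℂ) * (fderiv ℝ f z 1 + Complex.I * fderiv ℝ f z Complex.I)

/-- The Euclidean Laplacian `Δ = 4 ∂²/∂z∂z̄`. -/
def lap (f : ℂ → ℂ) (z : ℂ) : ℂ := 4 * wderiv (fun w => wderivBar f w) z

/-- `S(z) = ν z + μ (τ(z)·∂τ̄/∂z̄(z) − τ̄(z)·∂τ/∂z̄(z))`. -/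
def Sfun (ν μ : ℝ) (τ : ℂ → ℂ) (z : ℂ) : ℂ :=
  (ν : ℂ) * z + (μ : ℂ) *
    (τ z * wderivBar (fun w => (starRingEnd ℂ) (τ w)) z - (starRingEnd ℂ) (τ z) * wderivBar τ z)

/-- `B(z) = ν + μ(|∂τ/∂z(z)|² − |∂τ/∂z̄(z)|²)`. -/
def Bfun (ν μ : ℝ) (τ : ℂ → ℂ) (z : ℂ) : ℝ :=
  ν + μ * (‖wderiv τ z‖ ^ 2 - ‖wderivBar τ z‖ ^ 2)

/-- The magnetic Schrödinger operator `L`. -/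
def Lop (ν μ : ℝ) (τ : ℂ → ℂ) (f : ℂ → ℂ) (z : ℂ) : ℂ :=
  - wderiv (fun w => wderivBar f w) z
    - (Sfun ν μ τ z * wderiv f z - (starRingEnd ℂ) (Sfun ν μ τ z) * wderivBar f z)
    + ((‖Sfun ν μ τ z‖ : ℂ)) ^ 2 * f z
    - ((μ : ℂ) / 4) *
        (τ z * lap (fun w => (starRingEnd ℂ) (τ w)) z - (starRingEnd ℂ) (τ z) * lap τ z) * f z

/-- The annihilation operator `A f = ∂f/∂z̄ + S f`. -/
def Aop (ν μ : ℝ) (τ : ℂ → ℂ) (f : ℂ → ℂ) (z : ℂ) : ℂ :=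
  wderivBar f z + Sfun ν μ τ z * f z

/-- The creation operator `Ã f = −∂f/∂z + conj(S) f`. -/
def Atop (ν μ : ℝ) (τ : ℂ → ℂ) (f : ℂ → ℂ) (z : ℂ) : ℂ :=
  - wderiv f z + (starRingEnd ℂ) (Sfun ν μ τ z) * f z

/-- `J(g,z) = j^ν(g,z)·j^μ(ρ(g),τ(z))`. -/
def Jfun (ν μ : ℝ) (ρ : GT → GT) (τ : ℂ → ℂ) (g : GT) (z : ℂ) : ℂ :=
  jfac ν g z * jfac μ (ρ g) (τ z)

/-- `φ_ρ(g,g') = Im(ν⟨g⁻¹·0,g'·0⟩ + μ⟨ρ(g⁻¹)·0, ρ(g')·0⟩)`. -/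
def phiRho (ν μ : ℝ) (ρ : GT → GT) (g g' : GT) : ℝ :=
  ((ν : ℂ) * herm (GT.act g⁻¹ 0) (GT.act g' 0)
    + (μ : ℂ) * herm (GT.act (ρ g⁻¹) 0) (GT.act (ρ g') 0)).im

/-- Membership in the lattice `Γ = ℤω₁ + ℤω₂`. -/
def inLattice (ω₁ ω₂ : ℂ) (γ : ℂ) : Prop := ∃ m n : ℤ, γ = (m : ℂ) * ω₁ + (n : ℂ) * ω₂

/-- Mixed `Γ`-automorphic form of type `(ν,μ)` w.r.t. the pair `(ρ,τ)`. -/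
def MixedForm (ν μ : ℝ) (ρ : GT → GT) (τ : ℂ → ℂ) (ω₁ ω₂ : ℂ) (F : ℂ → ℂ) : Prop :=
  ContDiff ℝ (⊤ : ℕ∞) F ∧ ∀ γ : ℂ, inLattice ω₁ ω₂ γ → ∀ z : ℂ,
    F (z + γ) = jfac (-ν) ⟨(1 : Circle), γ⟩ z * jfac (-μ) (ρ ⟨(1 : Circle), γ⟩) (τ z) * F z

/-- The Laguerre polynomial `L_k`. -/
def laguerre (k : ℕ) (x : ℝ) : ℝ :=
  ∑ j ∈ Finset.range (k + 1), (-1) ^ j * (k.choose j : ℝ) * x ^ j / (Nat.factorial j : ℝ)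



section WHelpers
open Complex

private lemma fderiv_translate' (γ z : ℂ) (f : ℂ → ℂ) (hf : DifferentiableAt ℝ f (z + γ)) :
    fderiv ℝ (fun w => f (w + γ)) z = fderiv ℝ f (z + γ) := by
  have h1 : HasFDerivAt (fun w : ℂ => w + γ) (ContinuousLinearMap.id ℝ ℂ) z :=
    (hasFDerivAt_id z).add_const γ
  have := (hf.hasFDerivAt.comp z h1).fderiv
  simpa [Function.comp_def] using this

private lemma wderivBar_translate (γ z : ℂ) (f : ℂ → ℂ) (hf : DifferentiableAt ℝ f (z + γ)) :
    wderivBar (fun w => f (w + γ)) z = wderivBar f (z + γ) := by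
  unfold wderivBar; rw [fderiv_translate' γ z f hf]

private lemma wderivBar_add {f g : ℂ → ℂ} {z : ℂ} (hf : DifferentiableAt ℝ f z)
    (hg : DifferentiableAt ℝ g z) :
    wderivBar (fun w => f w + g w) z = wderivBar f z + wderivBar g z := by
  unfold wderivBar; rw [fderiv_fun_add hf hg]; simp; ring

private lemma wderivBar_sub {f g : ℂ → ℂ} {z : ℂ} (hf : DifferentiableAt ℝ f z)
    (hg : DifferentiableAt ℝ g z) :
    wderivBar (fun w => f w - g w) z = wderivBar f z - wderivBar g z := by
  unfold wderivBar; rw [fderiv_fun_sub hf hg]; simp; ring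

private lemma wderivBar_const_mul {f : ℂ → ℂ} {z : ℂ} (a : ℂ) (hf : DifferentiableAt ℝ f z) :
    wderivBar (fun w => a * f w) z = a * wderivBar f z := by
  unfold wderivBar; rw [fderiv_const_mul hf a]; simp; ring

private lemma wderivBar_const (a z : ℂ) : wderivBar (fun _ => a) z = 0 := by
  unfold wderivBar; simp

private lemma wderivBar_id (z : ℂ) : wderivBar (fun w => w) z = 0 := by
  unfold wderivBar
  rw [show (fun w : ℂ => w) = id from rfl, fderiv_id]
  simp [Complex.I_mul_I]

private lemma wderivBar_conj (z : ℂ) : wderivBar (fun w => (starRingEnd ℂ) w) z = 1 := by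
  unfold wderivBar
  have : fderiv ℝ (fun w : ℂ => (starRingEnd ℂ) w) z = Complex.conjCLE.toContinuousLinearMap :=
    (Complex.conjCLE.hasFDerivAt).fderiv
  rw [this]
  simp [Complex.conjCLE_apply, Complex.conj_I, Complex.I_mul_I]
  norm_num

private lemma wderiv_conj_comp (f : ℂ → ℂ) (z : ℂ) :
    wderiv (fun w => (starRingEnd ℂ) (f w)) z = (starRingEnd ℂ) (wderivBar f z) := by
  unfold wderiv wderivBar
  have : fderiv ℝ (fun w => (starRingEnd ℂ) (f w)) z
      = (Complex.conjCLE.toContinuousLinearMap).comp (fderiv ℝ f z) :=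
    Complex.conjCLE.comp_fderiv
  rw [this]
  simp only [ContinuousLinearMap.coe_comp', Function.comp_apply,
    ContinuousLinearEquiv.coe_coe, Complex.conjCLE_apply]
  rw [map_mul, map_add, map_mul, Complex.conj_I,
    show (starRingEnd ℂ) (1/2 : ℂ) = 1/2 from by rw [map_div₀, map_one, map_ofNat]]
  ring

private lemma wderiv_neg' (f : ℂ → ℂ) (z : ℂ) : wderiv (fun w => -(f w)) z = - wderiv f z := by
  unfold wderiv; rw [fderiv_fun_neg]; simp; ring

private lemma diff_conj : Differentiable ℝ (fun w : ℂ => (starRingEnd ℂ) w) := by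
  have : (fun w : ℂ => (starRingEnd ℂ) w) = ⇑Complex.conjCLE := funext fun w => rfl
  rw [this]; exact Complex.conjCLE.differentiable

/-- The key gauge-periodicity identity for `φ`. -/
private lemma key_phi (ν μ B : ℝ) (τ : ℂ → ℂ) (hτ : ContDiff ℝ (⊤ : ℕ∞) τ)
    (φ : ℂ → ℝ) (hφs : ContDiff ℝ (⊤ : ℕ∞) φ) (hφ0 : φ 0 = 0)
    (hφ : ∀ z : ℂ, wderivBar (fun w => (φ w : ℂ)) z = -Complex.I * (Sfun ν μ τ z - (B : ℂ) * z))
    (γ c d e : ℂ) (hc : c * (starRingEnd ℂ) c = 1) (he : e = -((starRingEnd ℂ) c * d))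
    (htrans : ∀ w : ℂ, τ (w + γ) = c * τ w + d) :
    ∀ z : ℂ,
      Complex.I * ((φ (z + γ) : ℝ) : ℂ) - Complex.I * ((φ z : ℝ) : ℂ)
          - Complex.I * ((φ γ : ℝ) : ℂ)
        = ((B : ℂ) - ν) * (starRingEnd ℂ) γ * z - ((B : ℂ) - ν) * γ * (starRingEnd ℂ) z
          + (μ : ℂ) * (starRingEnd ℂ) e * τ z - (μ : ℂ) * (starRingEnd ℂ) e * τ 0
          - (μ : ℂ) * e * (starRingEnd ℂ) (τ z) + (μ : ℂ) * e * (starRingEnd ℂ) (τ 0) := by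
  set φc : ℂ → ℂ := fun w => ((φ w : ℝ) : ℂ) with hφc
  set σ : ℂ → ℂ := fun w => (starRingEnd ℂ) (τ w) with hσdef
  have dφc : Differentiable ℝ φc := (Complex.ofRealCLM.contDiff.comp hφs).differentiable (by simp)
  have dτ : Differentiable ℝ τ := hτ.differentiable (by simp)
  have dσ : Differentiable ℝ σ := by
    rw [hσdef]; exact diff_conj.comp dτ
  -- the function h
  set h : ℂ → ℂ := fun w =>
    Complex.I * φc (w + γ) - Complex.I * φc w - Complex.I * φc γ
      - ((B : ℂ) - ν) * (starRingEnd ℂ) γ * w + ((B : ℂ) - ν) * γ * (starRingEnd ℂ) w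
      - (μ : ℂ) * (starRingEnd ℂ) e * τ w + (μ : ℂ) * (starRingEnd ℂ) e * τ 0
      + (μ : ℂ) * e * σ w - (μ : ℂ) * e * σ 0 with hh
  -- differentiability
  have dφt : Differentiable ℝ (fun w : ℂ => φc (w + γ)) :=
    dφc.comp (differentiable_fun_id.add_const γ)
  have dh : Differentiable ℝ h := by
    apply Differentiable.sub
    apply Differentiable.add
    apply Differentiable.add
    apply Differentiable.sub
    apply Differentiable.add
    apply Differentiable.sub
    apply Differentiable.sub
    apply Differentiable.sub
    · exact dφt.const_mul _
    · exact dφc.const_mul _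
    · exact differentiable_const _
    · exact differentiable_fun_id.const_mul _
    · exact diff_conj.const_mul _
    · exact dτ.const_mul _
    · exact differentiable_const _
    · exact dσ.const_mul _
    · exact differentiable_const _
  -- translation identities for derivatives
  have hστrans : ∀ w : ℂ, σ (w + γ) = (starRingEnd ℂ) c * σ w + (starRingEnd ℂ) d := by
    intro w; simp only [hσdef, htrans w, map_add, map_mul]
  have hwt : ∀ z : ℂ, wderivBar τ (z + γ) = c * wderivBar τ z := by
    intro z
    have h1 := wderivBar_translate γ z τ (dτ _)
    have h2 : (fun w => τ (w + γ)) = fun w => c * τ w + d := funext htrans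
    rw [h2] at h1
    rw [← h1, wderivBar_add ((dτ.const_mul c) z) (differentiableAt_const d),
      wderivBar_const, wderivBar_const_mul c (dτ z), add_zero]
  have hws : ∀ z : ℂ, wderivBar σ (z + γ) = (starRingEnd ℂ) c * wderivBar σ z := by
    intro z
    have h1 := wderivBar_translate γ z σ (dσ _)
    have h2 : (fun w => σ (w + γ)) = fun w => (starRingEnd ℂ) c * σ w + (starRingEnd ℂ) d :=
      funext hστrans
    rw [h2] at h1
    rw [← h1, wderivBar_add ((dσ.const_mul ((starRingEnd ℂ) c)) z)
        (differentiableAt_const ((starRingEnd ℂ) d)),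
      wderivBar_const, wderivBar_const_mul ((starRingEnd ℂ) c) (dσ z), add_zero]
  -- wderivBar h = 0
  have hwbar : ∀ z : ℂ, wderivBar h z = 0 := by
    intro z
    have e1 : wderivBar (fun w : ℂ => Complex.I * φc (w + γ)) z
        = Complex.I * wderivBar φc (z + γ) := by
      rw [wderivBar_const_mul Complex.I (dφt z), wderivBar_translate γ z φc (dφc _)]
    have e2 : wderivBar (fun w : ℂ => Complex.I * φc w) z = Complex.I * wderivBar φc z :=
      wderivBar_const_mul Complex.I (dφc z)
    have e4 : wderivBar (fun w : ℂ => ((B : ℂ) - ν) * (starRingEnd ℂ) γ * w) z = 0 := by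
      rw [wderivBar_const_mul _ differentiableAt_fun_id, wderivBar_id, mul_zero]
    have e5 : wderivBar (fun w : ℂ => ((B : ℂ) - ν) * γ * (starRingEnd ℂ) w) z
        = ((B : ℂ) - ν) * γ := by
      rw [wderivBar_const_mul _ (diff_conj z), wderivBar_conj, mul_one]
    have e6 : wderivBar (fun w : ℂ => (μ : ℂ) * (starRingEnd ℂ) e * τ w) z
        = (μ : ℂ) * (starRingEnd ℂ) e * wderivBar τ z := wderivBar_const_mul _ (dτ z)
    have e8 : wderivBar (fun w : ℂ => (μ : ℂ) * e * σ w) z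
        = (μ : ℂ) * e * wderivBar σ z := wderivBar_const_mul _ (dσ z)
    have hsplit : wderivBar h z
        = Complex.I * wderivBar φc (z + γ) - Complex.I * wderivBar φc z - 0
          - 0 + ((B : ℂ) - ν) * γ
          - (μ : ℂ) * (starRingEnd ℂ) e * wderivBar τ z + 0
          + (μ : ℂ) * e * wderivBar σ z - 0 := by
      rw [hh]
      rw [wderivBar_sub (by
          exact (((((((dφt.const_mul _).sub (dφc.const_mul _)).sub
            (differentiable_const _)).sub (differentiable_fun_id.const_mul _)).add
            (diff_conj.const_mul _)).sub (dτ.const_mul _)).add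
            (differentiable_const _)).add (dσ.const_mul _) |>.differentiableAt)
          (differentiableAt_const _)]
      rw [wderivBar_add (by
          exact ((((((dφt.const_mul _).sub (dφc.const_mul _)).sub
            (differentiable_const _)).sub (differentiable_fun_id.const_mul _)).add
            (diff_conj.const_mul _)).sub (dτ.const_mul _)).add
            (differentiable_const _) |>.differentiableAt)
          ((dσ.const_mul _) z)]
      rw [wderivBar_add (by
          exact (((((dφt.const_mul _).sub (dφc.const_mul _)).sub
            (differentiable_const _)).sub (differentiable_fun_id.const_mul _)).add
            (diff_conj.const_mul _)).sub (dτ.const_mul _) |>.differentiableAt)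
          (differentiableAt_const _)]
      rw [wderivBar_sub (by
          exact ((((dφt.const_mul _).sub (dφc.const_mul _)).sub
            (differentiable_const _)).sub (differentiable_fun_id.const_mul _)).add
            (diff_conj.const_mul _) |>.differentiableAt)
          ((dτ.const_mul _) z)]
      rw [wderivBar_add (by
          exact (((dφt.const_mul _).sub (dφc.const_mul _)).sub
            (differentiable_const _)).sub (differentiable_fun_id.const_mul _) |>.differentiableAt)
          ((diff_conj.const_mul _) z)]
      rw [wderivBar_sub (by
          exact ((dφt.const_mul _).sub (dφc.const_mul _)).sub
            (differentiable_const _) |>.differentiableAt)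
          ((differentiable_fun_id.const_mul _) z)]
      rw [wderivBar_sub (by
          exact (dφt.const_mul _).sub (dφc.const_mul _) |>.differentiableAt)
          (differentiableAt_const _)]
      rw [wderivBar_sub ((dφt.const_mul _) z) ((dφc.const_mul _) z)]
      rw [e1, e2, wderivBar_const, e4, e5, e6, wderivBar_const, e8, wderivBar_const]
    have hphi : ∀ y : ℂ, Complex.I * wderivBar φc y = Sfun ν μ τ y - (B : ℂ) * y := by
      intro y
      rw [hφ y]
      linear_combination (-(Sfun ν μ τ y - (B : ℂ) * y)) * Complex.I_sq
    rw [hsplit, hphi (z + γ), hphi z]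
    unfold Sfun
    rw [← hσdef]
    rw [hwt z, hws z, htrans z, he]
    simp only [map_add, map_mul, map_neg, Complex.conj_conj]
    linear_combination ((μ : ℂ) * (τ z * wderivBar σ z
      - (starRingEnd ℂ) (τ z) * wderivBar τ z)) * hc
  -- h is purely imaginary, so wderiv h = 0 as well
  have hconj : ∀ w : ℂ, (starRingEnd ℂ) (h w) = -(h w) := by
    intro w
    rw [hh]
    simp only [hφc, hσdef, map_sub, map_add, map_mul, map_neg, Complex.conj_conj,
      Complex.conj_I, Complex.conj_ofReal]
    ring
  have hwd : ∀ z : ℂ, wderiv h z = 0 := by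
    intro z
    have h1 : (fun w => (starRingEnd ℂ) (h w)) = fun w => -(h w) := funext hconj
    have h2 := wderiv_conj_comp h z
    rw [h1, wderiv_neg' h z, hwbar z, map_zero] at h2
    exact neg_eq_zero.mp h2
  -- fderiv h = 0
  have hL : ∀ z : ℂ, fderiv ℝ h z = 0 := by
    intro z
    have e1 := hwbar z
    have e2 := hwd z
    unfold wderivBar at e1
    unfold wderiv at e2
    have ha : fderiv ℝ h z 1 = 0 := by linear_combination e1 + e2
    have hb : fderiv ℝ h z Complex.I = 0 := by
      linear_combination (-Complex.I) * e1 + Complex.I * e2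
        + (fderiv ℝ h z Complex.I) * Complex.I_sq
    ext v
    have hv : (v.re : ℝ) • (1 : ℂ) + (v.im : ℝ) • Complex.I = v := by
      simp only [Complex.real_smul, mul_one]
      exact Complex.re_add_im v
    rw [← hv]
    rw [map_add, map_smul, map_smul, ha, hb]
    try simp
  have hcst := is_const_of_fderiv_eq_zero (𝕜 := ℝ) dh hL
  have h0 : h 0 = 0 := by
    rw [hh]
    simp only [hφc, hσdef, zero_add, map_zero]
    rw [hφ0]
    push_cast
    ring
  intro z
  have hz : h z = 0 := by rw [hcst z 0, h0]
  rw [hh] at hz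
  simp only [hφc, hσdef] at hz ⊢
  linear_combination hz
end WHelpers

/-- The multiplier `χ_τ(γ) = exp(iφ(γ) − 2iμ Im⟨τ(0), ρ([1,γ])⁻¹·0⟩)`. -/
def chiTau (μ : ℝ) (ρ : GT → GT) (τ : ℂ → ℂ) (φ : ℂ → ℝ) (γ : ℂ) : ℂ :=
  Complex.exp (Complex.I * (φ γ : ℂ)
    - 2 * Complex.I * (μ : ℂ) * ((herm (τ 0) (GT.act (ρ ⟨1, γ⟩)⁻¹ 0)).im : ℂ))

/-- The eigenprojector kernel `K_k`. -/
def Kker (B : ℝ) (φ : ℂ → ℝ) (k : ℕ) (z w : ℂ) : ℂ :=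
  ((2 * B / Real.pi : ℝ) : ℂ) * Complex.exp (-Complex.I * ((φ z - φ w : ℝ) : ℂ)) *
    Complex.exp (2 * Complex.I * (B : ℂ) * ((herm z w).im : ℂ)) *
    Complex.exp (-((B * ‖z - w‖ ^ 2 : ℝ) : ℂ)) *
    ((laguerre k (2 * B * ‖z - w‖ ^ 2) : ℝ) : ℂ)

/-- The kernel `K^σ_ξ;k`. -/
def Kxi (σ : ℝ) (ξ : ℂ) (k : ℕ) (z w : ℂ) : ℂ :=
  ((2 * σ / Real.pi : ℝ) : ℂ) * Complex.exp (2 * Complex.I * ((herm (z - w) ξ).im : ℂ)) *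
    Complex.exp (2 * Complex.I * (σ : ℂ) * ((herm z w).im : ℂ)) *
    Complex.exp (-((σ * ‖z - w‖ ^ 2 : ℝ) : ℂ)) *
    ((laguerre k (2 * σ * ‖z - w‖ ^ 2) : ℝ) : ℂ)

/-- `m`-fold iterate of the creation operator `Ã`. -/
def AtopIter (ν μ : ℝ) (τ : ℂ → ℂ) (m : ℕ) (f : ℂ → ℂ) : ℂ → ℂ :=
  (fun u z => Atop ν μ τ u z)^[m] f

theorem statement7 (ν μ : ℝ) (hν : 0 < ν) (hμ : 0 < μ)
    (ρ : GT →* GT) (τ : ℂ → ℂ) (hτ : ContDiff ℝ (⊤ : ℕ∞) τ)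
    (hequiv : ∀ (g : GT) (z : ℂ), τ (GT.act g z) = GT.act (ρ g) (τ z))
    (B : ℝ) (hB : ∀ z : ℂ, Bfun ν μ τ z = B)
    (φ : ℂ → ℝ) (hφs : ContDiff ℝ (⊤ : ℕ∞) φ) (hφ0 : φ 0 = 0)
    (hφ : ∀ z : ℂ, wderivBar (fun w => (φ w : ℂ)) z = -Complex.I * (Sfun ν μ τ z - (B : ℂ) * z))
    (ω₁ ω₂ : ℂ) (hω : LinearIndependent ℝ ![ω₁, ω₂])
    (F : ℂ → ℂ) (hF : ContDiff ℝ (⊤ : ℕ∞) F) :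
    MixedForm ν μ (⇑ρ) τ ω₁ ω₂ F ↔
      (∀ γ : ℂ, inLattice ω₁ ω₂ γ → ∀ z : ℂ,
        Complex.exp (Complex.I * (φ (z + γ) : ℂ)) * F (z + γ) =
          chiTau μ (⇑ρ) τ φ γ * jfac (-B) ⟨1, γ⟩ z *
            (Complex.exp (Complex.I * (φ z : ℂ)) * F z)) := by
  -- First, the universal cocycle identity
  have hC2 : ∀ (a : Circle), (a : ℂ) * (starRingEnd ℂ) (a : ℂ) = 1 := by
    intro a
    rw [Complex.mul_conj, Circle.normSq_coe]
    norm_num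
  have hinv : ∀ g : GT, g⁻¹ = ⟨g.a⁻¹, -((g.a⁻¹ : Circle) : ℂ) * g.b⟩ := by
    intro g
    refine GT.ext rfl ?_
    show -(((g.a⁻¹ : Circle) : ℂ) * g.b) = -((g.a⁻¹ : Circle) : ℂ) * g.b
    ring
  have hE : ∀ γ : ℂ, ∀ z : ℂ,
      Complex.exp (Complex.I * (φ (z + γ) : ℂ)) *
          (jfac (-ν) ⟨(1 : Circle), γ⟩ z * jfac (-μ) (ρ ⟨(1 : Circle), γ⟩) (τ z))
        = chiTau μ (⇑ρ) τ φ γ * jfac (-B) ⟨1, γ⟩ z * Complex.exp (Complex.I * (φ z : ℂ)) := by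
    intro γ z
    set g : GT := ρ ⟨(1 : Circle), γ⟩ with hg
    set c : ℂ := ((g.a : Circle) : ℂ) with hcdef
    set d : ℂ := g.b with hddef
    set e : ℂ := GT.act g⁻¹ 0 with hedef
    have he : e = -((starRingEnd ℂ) c * d) := by
      rw [hedef, hinv g]
      show ((g.a⁻¹ : Circle) : ℂ) * 0 + -((g.a⁻¹ : Circle) : ℂ) * g.b = _
      rw [Circle.coe_inv_eq_conj]
      ring
    have hc : c * (starRingEnd ℂ) c = 1 := hC2 g.a
    have htrans : ∀ w : ℂ, τ (w + γ) = c * τ w + d := by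
      intro w
      have h1 := hequiv ⟨(1 : Circle), γ⟩ w
      have h2 : GT.act ⟨(1 : Circle), γ⟩ w = w + γ := by
        show ((1 : Circle) : ℂ) * w + γ = w + γ
        simp
      rw [h2] at h1
      rw [h1]
      rfl
    have hkey := key_phi ν μ B τ hτ φ hφs hφ0 hφ γ c d e hc he htrans z
    -- negated act for the translation part
    have hng : GT.act ((⟨(1 : Circle), γ⟩ : GT))⁻¹ 0 = -γ := by
      rw [hinv]
      show ((((1 : Circle))⁻¹ : Circle) : ℂ) * 0 + -((((1 : Circle))⁻¹ : Circle) : ℂ) * γ = -γ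
      simp
    unfold jfac chiTau herm
    rw [hng]
    rw [show GT.act (ρ ⟨(1 : Circle), γ⟩)⁻¹ 0 = e from rfl]
    rw [← Complex.exp_add, ← Complex.exp_add, ← Complex.exp_add, ← Complex.exp_add]
    congr 1
    -- now a scalar identity
    have him : ∀ X : ℂ, X - (starRingEnd ℂ) X = 2 * ((X.im : ℝ) : ℂ) * Complex.I := by
      intro X
      rw [Complex.sub_conj]
      push_cast
      ring
    have h1 : z * (starRingEnd ℂ) (-γ) - (starRingEnd ℂ) z * (-γ)
        = 2 * (((z * (starRingEnd ℂ) (-γ)).im : ℝ) : ℂ) * Complex.I := by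
      have := him (z * (starRingEnd ℂ) (-γ))
      rwa [show (starRingEnd ℂ) (z * (starRingEnd ℂ) (-γ)) = (starRingEnd ℂ) z * (-γ) from by
        rw [map_mul, Complex.conj_conj]] at this
    have h2 : τ z * (starRingEnd ℂ) e - (starRingEnd ℂ) (τ z) * e
        = 2 * (((τ z * (starRingEnd ℂ) e).im : ℝ) : ℂ) * Complex.I := by
      have := him (τ z * (starRingEnd ℂ) e)
      rwa [show (starRingEnd ℂ) (τ z * (starRingEnd ℂ) e) = (starRingEnd ℂ) (τ z) * e from by
        rw [map_mul, Complex.conj_conj]] at this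
    have h3 : τ 0 * (starRingEnd ℂ) e - (starRingEnd ℂ) (τ 0) * e
        = 2 * (((τ 0 * (starRingEnd ℂ) e).im : ℝ) : ℂ) * Complex.I := by
      have := him (τ 0 * (starRingEnd ℂ) e)
      rwa [show (starRingEnd ℂ) (τ 0 * (starRingEnd ℂ) e) = (starRingEnd ℂ) (τ 0) * e from by
        rw [map_mul, Complex.conj_conj]] at this
    push_cast
    push_cast at hkey h1 h2 h3
    simp only [map_neg, mul_neg, neg_neg] at h1 ⊢
    linear_combination hkey - ((B : ℂ) - ν) * h1 + (μ : ℂ) * h2 - (μ : ℂ) * h3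
  constructor
  · rintro ⟨-, hFeq⟩ γ hγ z
    rw [hFeq γ hγ z]
    linear_combination (F z) * hE γ z
  · intro hG
    refine ⟨hF, fun γ hγ z => ?_⟩
    have h1 := hG γ hγ z
    have h4 : Complex.exp (Complex.I * (φ (z + γ) : ℂ)) * F (z + γ)
        = Complex.exp (Complex.I * (φ (z + γ) : ℂ)) *
          (jfac (-ν) ⟨(1 : Circle), γ⟩ z * jfac (-μ) (ρ ⟨(1 : Circle), γ⟩) (τ z) * F z) := by
      linear_combination h1 - (F z) * hE γ z
    exact mul_left_cancel₀ (Complex.exp_ne_zero _) h4
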